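/- Let A^{r×m}_l denote the set of r×m real matrices with at most l nonzero columns, and let S = A^{r×m}_l ∩ B(0,L) be its intersection with the open Frobenius ball of radius L > 0. Then the Minkowski dimension of S exists and equals l·r, provided l ≤ m. -/

import Mathlib

open MeasureTheory Filter Set
attribute [local instance] Matrix.frobeniusNormedAddCommGroup Matrix.frobeniusNormedSpace

noncomputable instance (m n : ℕ) : MeasureSpace (Matrix (Fin m) (Fin n) ℝ) :=
  inferInstanceAs (MeasureSpace ((Fin m) → (Fin n) → ℝ))

/-- covering number by open balls of radius ρ -/
noncomputable def covN {E : Type*} [PseudoMetricSpace E] (S : Set E) (ρ : ℝ) : ℕ :=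
  sInf {k : ℕ | ∃ t : Finset E, t.card = k ∧ S ⊆ ⋃ x ∈ t, Metric.ball x ρ}

noncomputable def dimUpper {E : Type*} [PseudoMetricSpace E] (S : Set E) : ℝ :=
  limsup (fun ρ : ℝ => Real.log (covN S ρ) / Real.log (1/ρ)) (nhdsWithin 0 (Set.Ioi 0))

noncomputable def dimLower {E : Type*} [PseudoMetricSpace E] (S : Set E) : ℝ :=
  liminf (fun ρ : ℝ => Real.log (covN S ρ) / Real.log (1/ρ)) (nhdsWithin 0 (Set.Ioi 0))

/-- singular values (unsorted, with multiplicity) -/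
noncomputable def singVals {m n : ℕ} (X : Matrix (Fin m) (Fin n) ℝ) : Fin n → ℝ :=
  fun i => Real.sqrt ((Matrix.isHermitian_conjTranspose_mul_self X).eigenvalues i)

noncomputable def sigma1 {m n : ℕ} (X : Matrix (Fin m) (Fin n) ℝ) : ℝ :=
  ⨆ i, singVals X i

open scoped Classical in
/-- product of nonzero singular values -/
noncomputable def Delta {m n : ℕ} (X : Matrix (Fin m) (Fin n) ℝ) : ℝ :=
  ∏ i ∈ Finset.univ.filter (fun i => singVals X i ≠ 0), singVals X i

/-- volume of the unit ball in ℝ^k -/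
noncomputable def VB (k : ℕ) : ℝ :=
  (volume (Metric.ball (0 : EuclideanSpace ℝ (Fin k)) 1)).toReal

/-- surface area of unit sphere in ℝ^r : A(r-1,1) = r * V(r,1) -/
noncomputable def ASurf (r : ℕ) : ℝ := r * VB r

/-- uniform distribution on the open ball of radius s in E -/
noncomputable def unifBall (E : Type*) [MeasureSpace E] [PseudoMetricSpace E] [Zero E] (s : ℝ) : Measure E :=
  (volume (Metric.ball (0 : E) s))⁻¹ • volume.restrict (Metric.ball (0:E) s)

section AuxCov

open Metric
open scoped ENNReal NNReal

section CovLemmas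
variable {α : Type*} [PseudoMetricSpace α]

lemma covN_le_card {S : Set α} {ρ : ℝ} {t : Finset α} (h : S ⊆ ⋃ x ∈ t, ball x ρ) :
    covN S ρ ≤ t.card := Nat.sInf_le ⟨t, rfl, h⟩

lemma covN_exists {S : Set α} {ρ : ℝ} (h : ∃ t : Finset α, S ⊆ ⋃ x ∈ t, ball x ρ) :
    ∃ t : Finset α, t.card = covN S ρ ∧ S ⊆ ⋃ x ∈ t, ball x ρ := by
  have hne : {k : ℕ | ∃ t : Finset α, t.card = k ∧ S ⊆ ⋃ x ∈ t, ball x ρ}.Nonempty := by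
    obtain ⟨t, ht⟩ := h; exact ⟨t.card, t, rfl, ht⟩
  exact Nat.sInf_mem hne

end CovLemmas

section Euclid
variable {ι : Type*} [Fintype ι] [Nonempty ι]

local notation "E" => EuclideanSpace ℝ ι
local notation "d" => Module.finrank ℝ (EuclideanSpace ℝ ι)

/-- volume lower bound for covers of a ball -/
lemma ball_le_cover {L ρ : ℝ} (hL : 0 < L) (hρ : 0 ≤ ρ) (t : Finset (EuclideanSpace ℝ ι))
    (hc : ball (0 : E) L ⊆ ⋃ x ∈ t, ball x ρ) :
    L ^ d ≤ (t.card : ℝ) * ρ ^ d := by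
  have hv0 : 0 < volume (ball (0 : E) 1) := measure_ball_pos _ _ one_pos
  have hvt : volume (ball (0 : E) 1) < ⊤ := measure_ball_lt_top
  have h1 : volume (ball (0 : E) L) ≤ ∑ x ∈ t, volume (ball x ρ) :=
    le_trans (measure_mono hc) (measure_biUnion_finset_le t _)
  rw [Measure.addHaar_ball _ _ hL.le] at h1
  have h2 : ∀ x ∈ t, volume (ball x ρ) = ENNReal.ofReal (ρ ^ d) * volume (ball (0:E) 1) :=
    fun x _ => Measure.addHaar_ball _ _ hρ
  rw [Finset.sum_congr rfl h2, Finset.sum_const, nsmul_eq_mul, ← mul_assoc] at h1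
  have h3 : ENNReal.ofReal (L ^ d) ≤ (t.card : ℝ≥0∞) * ENNReal.ofReal (ρ ^ d) :=
    (ENNReal.mul_le_mul_iff_left hv0.ne' hvt.ne).mp h1
  calc L ^ d = (ENNReal.ofReal (L ^ d)).toReal := by
        rw [ENNReal.toReal_ofReal (by positivity)]
    _ ≤ ((t.card : ℝ≥0∞) * ENNReal.ofReal (ρ ^ d)).toReal := by
        apply ENNReal.toReal_mono _ h3
        exact ENNReal.mul_ne_top (by simp) ENNReal.ofReal_ne_top
    _ = (t.card : ℝ) * ρ ^ d := by
        rw [ENNReal.toReal_mul, ENNReal.toReal_ofReal (by positivity)]; simp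

lemma card_le_of_sep {L ρ : ℝ} (hρ : 0 < ρ) (hL0 : 0 < L) (t : Finset (EuclideanSpace ℝ ι))
    (hsub : ∀ x ∈ t, x ∈ ball (0 : E) L)
    (hsep : ∀ x ∈ t, ∀ y ∈ t, x ≠ y → ρ ≤ dist x y) :
    (t.card : ℝ) * (ρ / 2) ^ d ≤ (L + ρ / 2) ^ d := by
  have hv0 : 0 < volume (ball (0 : E) 1) := measure_ball_pos _ _ one_pos
  have hvt : volume (ball (0 : E) 1) < ⊤ := measure_ball_lt_top
  have hL : 0 < L + ρ / 2 := by positivity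
  have hdisj : (↑t : Set (EuclideanSpace ℝ ι)).PairwiseDisjoint
      (fun x => ball x (ρ / 2)) := by
    intro x hx y hy hxy
    exact Metric.ball_disjoint_ball (by
      have := hsep x hx y hy hxy; linarith)
  have hunion : (⋃ x ∈ t, ball x (ρ / 2)) ⊆ ball (0 : E) (L + ρ / 2) := by
    refine Set.iUnion₂_subset fun x hx => ?_
    refine (Metric.ball_subset_ball' ?_)
    have := hsub x hx
    rw [mem_ball, dist_zero_right] at this
    rw [dist_zero_right]; linarith
  have h1 : ∑ x ∈ t, volume (ball x (ρ / 2)) ≤ volume (ball (0 : E) (L + ρ / 2)) := by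
    rw [← measure_biUnion_finset hdisj (fun x _ => measurableSet_ball)]
    exact measure_mono hunion
  rw [Measure.addHaar_ball _ _ hL.le] at h1
  have h2 : ∀ x ∈ t, volume (ball x (ρ/2)) = ENNReal.ofReal ((ρ/2) ^ d) * volume (ball (0:E) 1) :=
    fun x _ => Measure.addHaar_ball _ _ (by positivity)
  rw [Finset.sum_congr rfl h2, Finset.sum_const, nsmul_eq_mul, ← mul_assoc] at h1
  have h3 : (t.card : ℝ≥0∞) * ENNReal.ofReal ((ρ/2) ^ d) ≤ ENNReal.ofReal ((L + ρ/2) ^ d) :=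
    (ENNReal.mul_le_mul_iff_left hv0.ne' hvt.ne).mp h1
  calc (t.card : ℝ) * (ρ/2) ^ d
      = ((t.card : ℝ≥0∞) * ENNReal.ofReal ((ρ/2) ^ d)).toReal := by
        rw [ENNReal.toReal_mul, ENNReal.toReal_ofReal (by positivity)]; simp
    _ ≤ (ENNReal.ofReal ((L + ρ/2) ^ d)).toReal := by
        apply ENNReal.toReal_mono ENNReal.ofReal_ne_top h3
    _ = (L + ρ/2) ^ d := ENNReal.toReal_ofReal (by positivity)

lemma exists_cover {L ρ : ℝ} (hρ : 0 < ρ) (hL : 0 < L) :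
    ∃ t : Finset (EuclideanSpace ℝ ι), (t.card : ℝ) * (ρ / 2) ^ d ≤ (L + ρ / 2) ^ d ∧
      ball (0 : E) L ⊆ ⋃ x ∈ t, ball x ρ := by
  classical
  set P : Set ℕ := {k | ∃ t : Finset (EuclideanSpace ℝ ι), t.card = k ∧
    (∀ x ∈ t, x ∈ ball (0 : E) L) ∧ ∀ x ∈ t, ∀ y ∈ t, x ≠ y → ρ ≤ dist x y} with hP
  have h0 : 0 ∈ P := ⟨∅, by simp⟩
  have hbdd : BddAbove P := by
    refine ⟨⌈(L + ρ / 2) ^ d / ((ρ / 2) ^ d)⌉₊, fun k hk => ?_⟩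
    obtain ⟨t, rfl, hsub, hsep⟩ := hk
    have := card_le_of_sep hρ hL t hsub hsep
    have hpos : (0:ℝ) < (ρ / 2) ^ d := by positivity
    have : (t.card : ℝ) ≤ (L + ρ / 2) ^ d / ((ρ / 2) ^ d) := by
      rw [le_div_iff₀ hpos]; exact this
    exact Nat.cast_le.mp (this.trans (Nat.le_ceil _))
  obtain ⟨t, htc, hsub, hsep⟩ := Nat.sSup_mem ⟨0, h0⟩ hbdd
  refine ⟨t, card_le_of_sep hρ hL t hsub hsep, ?_⟩
  intro y hy
  by_contra hyc
  simp only [Set.mem_iUnion, mem_ball, not_exists, not_lt] at hyc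
  have hynt : y ∉ t := fun h => absurd (hyc y h) (by simp [hρ])
  have hmem : t.card + 1 ∈ P := by
    refine ⟨insert y t, by rw [Finset.card_insert_of_notMem hynt], ?_, ?_⟩
    · intro x hx
      rcases Finset.mem_insert.mp hx with rfl | hx
      · exact hy
      · exact hsub x hx
    · intro x hx z hz hxz
      rcases Finset.mem_insert.mp hx with hxy | hx2
      · subst hxy
        rcases Finset.mem_insert.mp hz with hzy | hz2
        · exact absurd hzy.symm hxz
        · exact hyc z hz2
      · rcases Finset.mem_insert.mp hz with hzy | hz2
        · subst hzy
          rw [dist_comm]; exact hyc x hx2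
        · exact hsep x hx2 z hz2 hxz
  have := le_csSup hbdd hmem
  omega

end Euclid

section Psi
variable {r l m : ℕ}

noncomputable def psi (J : Finset (Fin m)) (hJ : J.card = l)
    (y : EuclideanSpace ℝ (Fin r × Fin l)) : Matrix (Fin r) (Fin m) ℝ :=
  Matrix.of fun i j => if h : j ∈ J then y (i, J.equivFinOfCardEq hJ ⟨j, h⟩) else 0

lemma psi_apply_mem (J : Finset (Fin m)) (hJ : J.card = l)
    (y : EuclideanSpace ℝ (Fin r × Fin l)) {j : Fin m} (h : j ∈ J) (i : Fin r) :
    psi J hJ y i j = y (i, J.equivFinOfCardEq hJ ⟨j, h⟩) := dif_pos h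

lemma psi_apply_not_mem (J : Finset (Fin m)) (hJ : J.card = l)
    (y : EuclideanSpace ℝ (Fin r × Fin l)) {j : Fin m} (h : j ∉ J) (i : Fin r) :
    psi J hJ y i j = 0 := dif_neg h

lemma psi_entry_sq (J : Finset (Fin m)) (hJ : J.card = l)
    (y : EuclideanSpace ℝ (Fin r × Fin l)) (i : Fin r) :
    ∑ j : Fin m, ‖psi J hJ y i j‖ ^ (2:ℝ) = ∑ k : Fin l, ‖y (i, k)‖ ^ (2:ℝ) := by
  classical
  set e := J.equivFinOfCardEq hJ with he
  set κ : Fin l → Fin m := fun k => ((e.symm k : ↥J) : Fin m) with hκ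
  have hκinj : Function.Injective κ := fun a b hab =>
    e.symm.injective (Subtype.ext hab)
  have himg : Finset.image κ Finset.univ = J := by
    ext j
    simp only [Finset.mem_image, Finset.mem_univ, true_and]
    constructor
    · rintro ⟨k, rfl⟩; exact (e.symm k).2
    · intro hj; exact ⟨e ⟨j, hj⟩, by simp [hκ]⟩
  have hvan : ∀ j ∈ Finset.univ, j ∉ Finset.image κ Finset.univ →
      ‖psi J hJ y i j‖ ^ (2:ℝ) = 0 := by
    intro j _ hj
    rw [psi_apply_not_mem J hJ y (himg ▸ hj) i]
    simp
  rw [← Finset.sum_subset (Finset.subset_univ (Finset.image κ Finset.univ)) hvan,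
    Finset.sum_image (fun a _ b _ h => hκinj h)]
  refine Finset.sum_congr rfl fun k _ => ?_
  have hk : κ k ∈ J := (e.symm k).2
  rw [psi_apply_mem J hJ y hk i]
  congr 2
  rw [show (⟨κ k, hk⟩ : ↥J) = e.symm k from Subtype.ext rfl, Equiv.apply_symm_apply]

lemma psi_norm (J : Finset (Fin m)) (hJ : J.card = l)
    (y : EuclideanSpace ℝ (Fin r × Fin l)) : ‖psi J hJ y‖ = ‖y‖ := by
  rw [Matrix.frobenius_norm_def, EuclideanSpace.norm_eq, Real.sqrt_eq_rpow]
  congr 1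
  simp_rw [psi_entry_sq J hJ y]
  simp_rw [show ((2:ℝ)) = ((2:ℕ):ℝ) by norm_num, Real.rpow_natCast]
  rw [Fintype.sum_prod_type]

lemma psi_sub (J : Finset (Fin m)) (hJ : J.card = l)
    (y z : EuclideanSpace ℝ (Fin r × Fin l)) :
    psi J hJ y - psi J hJ z = psi J hJ (y - z) := by
  ext i j
  simp only [Matrix.sub_apply]
  by_cases h : j ∈ J
  · rw [psi_apply_mem J hJ y h i, psi_apply_mem J hJ z h i, psi_apply_mem J hJ _ h i]
    rfl
  · rw [psi_apply_not_mem J hJ y h i, psi_apply_not_mem J hJ z h i,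
      psi_apply_not_mem J hJ _ h i]
    simp

lemma psi_dist (J : Finset (Fin m)) (hJ : J.card = l)
    (y z : EuclideanSpace ℝ (Fin r × Fin l)) :
    dist (psi J hJ y) (psi J hJ z) = dist y z := by
  rw [dist_eq_norm, dist_eq_norm, psi_sub, psi_norm]

end Psi

end AuxCov

theorem stmt6 (r l m : ℕ) (hr : 0 < r) (hl : 0 < l) (hm : 0 < m) (hlm : l ≤ m)
    (L : ℝ) (hL : 0 < L) (S : Set (Matrix (Fin r) (Fin m) ℝ))
    (hS : S = {X : Matrix (Fin r) (Fin m) ℝ |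
        ∃ J : Finset (Fin m), J.card ≤ l ∧ ∀ j ∉ J, ∀ i, X i j = 0} ∩ Metric.ball 0 L) :
    Filter.Tendsto (fun ρ : ℝ => Real.log (covN S ρ) / Real.log (1 / ρ))
      (nhdsWithin 0 (Set.Ioi 0)) (nhds ((l : ℝ) * r)) := by
  classical
  open Metric in
  have hlm' : l ≤ Fintype.card (Fin m) := by simpa using hlm
  haveI : Nonempty (Fin r × Fin l) := ⟨(⟨0, hr⟩, ⟨0, hl⟩)⟩
  set d := Module.finrank ℝ (EuclideanSpace ℝ (Fin r × Fin l)) with hd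
  have hdval : d = r * l := by
    rw [hd, finrank_euclideanSpace]; simp
  obtain ⟨J₀, -, hJ₀⟩ := Finset.exists_superset_card_eq (s := (∅ : Finset (Fin m)))
    (by simp) hlm'
  have hC₁pos : 0 < (L/2)^d := by positivity
  have hC₂pos : 0 < (2:ℝ)^m * (4*L)^d := by positivity
  have hbounds : ∀ ρ : ℝ, 0 < ρ → ρ ≤ L →
      (L/2)^d * ρ⁻¹ ^ d ≤ (covN S ρ : ℝ) ∧ (covN S ρ : ℝ) ≤ ((2:ℝ)^m * (4*L)^d) * ρ⁻¹ ^ d := by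
    intro ρ hρ hρL
    obtain ⟨t₀, ht₀card, ht₀cov⟩ := exists_cover (ι := Fin r × Fin l) (L := L) hρ hL
    set T : Finset (Matrix (Fin r) (Fin m) ℝ) :=
      (Finset.univ : Finset {J : Finset (Fin m) // J.card = l}).biUnion
        (fun J => t₀.image (psi J.1 J.2)) with hT
    have hTcov : S ⊆ ⋃ x ∈ T, ball x ρ := by
      rintro X hX
      rw [hS] at hX
      obtain ⟨⟨J', hJ'card, hJ'supp⟩, hXball⟩ := hX
      obtain ⟨J, hsubJ, hJcard⟩ := Finset.exists_superset_card_eq hJ'card hlm'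
      set e := J.equivFinOfCardEq hJcard with he
      set y : EuclideanSpace ℝ (Fin r × Fin l) :=
        WithLp.toLp 2 (fun p : Fin r × Fin l => X p.1 ((e.symm p.2 : ↥J) : Fin m)) with hy
      have hpsiy : psi J hJcard y = X := by
        ext i j
        by_cases h : j ∈ J
        · rw [psi_apply_mem J hJcard y h i]
          show X i ((e.symm (e ⟨j, h⟩) : ↥J) : Fin m) = X i j
          rw [Equiv.symm_apply_apply]
        · rw [psi_apply_not_mem J hJcard y h i]
          exact (hJ'supp j (fun hj => h (hsubJ hj)) i).symm
      have hymem : y ∈ ball (0 : EuclideanSpace ℝ (Fin r × Fin l)) L := by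
        rw [mem_ball_zero_iff, ← psi_norm J hJcard y, hpsiy]
        exact mem_ball_zero_iff.mp hXball
      have hcovy := ht₀cov hymem
      simp only [Set.mem_iUnion] at hcovy
      obtain ⟨c, hc, hyc⟩ := hcovy
      refine Set.mem_iUnion₂.mpr ⟨psi J hJcard c, ?_, ?_⟩
      · exact Finset.mem_biUnion.mpr
          ⟨⟨J, hJcard⟩, Finset.mem_univ _, Finset.mem_image_of_mem _ hc⟩
      · rw [mem_ball, ← hpsiy, psi_dist]
        exact mem_ball.mp hyc
    have hcovle : covN S ρ ≤ T.card := covN_le_card hTcov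
    have hTcardN : T.card ≤ 2^m * t₀.card := by
      refine le_trans Finset.card_biUnion_le ?_
      refine le_trans (Finset.sum_le_sum fun J _ => Finset.card_image_le) ?_
      rw [Finset.sum_const, smul_eq_mul]
      have hcard2 : Fintype.card {J : Finset (Fin m) // J.card = l} ≤ 2^m := by
        refine le_trans (Fintype.card_subtype_le _) ?_
        simp [Fintype.card_finset]
      refine Nat.mul_le_mul_right _ ?_
      simpa [Finset.card_univ] using hcard2
    have ht₀real : (t₀.card : ℝ) ≤ (4*L)^d * ρ⁻¹^d := by
      have h1 : (t₀.card:ℝ) * (ρ/2)^d ≤ (2*L)^d :=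
        ht₀card.trans (pow_le_pow_left₀ (by positivity) (by linarith) d)
      rw [← mul_pow, show (4*L)*ρ⁻¹ = (2*L)/(ρ/2) by field_simp; ring, div_pow,
        le_div_iff₀ (by positivity)]
      exact h1
    have hupper : (covN S ρ : ℝ) ≤ ((2:ℝ)^m * (4*L)^d) * ρ⁻¹^d := by
      calc (covN S ρ : ℝ) ≤ (T.card:ℝ) := Nat.cast_le.mpr hcovle
        _ ≤ ((2^m * t₀.card : ℕ) : ℝ) := Nat.cast_le.mpr hTcardN
        _ = (2:ℝ)^m * t₀.card := by push_cast; ring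
        _ ≤ (2:ℝ)^m * ((4*L)^d * ρ⁻¹^d) :=
            mul_le_mul_of_nonneg_left ht₀real (by positivity)
        _ = ((2:ℝ)^m * (4*L)^d) * ρ⁻¹^d := by ring
    obtain ⟨topt, htoptcard, htoptcov⟩ := covN_exists ⟨T, hTcov⟩
    set cE : Matrix (Fin r) (Fin m) ℝ → EuclideanSpace ℝ (Fin r × Fin l) := fun x =>
      if h : ∃ y : EuclideanSpace ℝ (Fin r × Fin l), psi J₀ hJ₀ y ∈ ball x ρ
      then h.choose else 0 with hcE
    have hcover2 : ball (0 : EuclideanSpace ℝ (Fin r × Fin l)) L ⊆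
        ⋃ z ∈ topt.image cE, ball z (2*ρ) := by
      intro y hy
      have hyS : psi J₀ hJ₀ y ∈ S := by
        rw [hS]
        refine ⟨⟨J₀, le_of_eq hJ₀, fun j hj i => psi_apply_not_mem J₀ hJ₀ y hj i⟩, ?_⟩
        rw [mem_ball_zero_iff, psi_norm]
        exact mem_ball_zero_iff.mp hy
      have hcovy := htoptcov hyS
      simp only [Set.mem_iUnion] at hcovy
      obtain ⟨x, hx, hyx⟩ := hcovy
      have hex : ∃ y' : EuclideanSpace ℝ (Fin r × Fin l), psi J₀ hJ₀ y' ∈ ball x ρ := ⟨y, hyx⟩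
      have hspec := hex.choose_spec
      refine Set.mem_iUnion₂.mpr ⟨cE x, Finset.mem_image_of_mem _ hx, ?_⟩
      rw [mem_ball]
      have h1 : cE x = hex.choose := dif_pos hex
      calc dist y (cE x) = dist (psi J₀ hJ₀ y) (psi J₀ hJ₀ (cE x)) := (psi_dist _ _ _ _).symm
        _ ≤ dist (psi J₀ hJ₀ y) x + dist x (psi J₀ hJ₀ (cE x)) := dist_triangle _ _ _
        _ < ρ + ρ := by
            refine add_lt_add (mem_ball.mp hyx) ?_
            rw [dist_comm, h1]
            exact mem_ball.mp hspec
        _ = 2*ρ := by ring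
    have hvol := ball_le_cover (ι := Fin r × Fin l) hL
      (by positivity : (0:ℝ) ≤ 2*ρ) _ hcover2
    have hlow : (L/2)^d * ρ⁻¹^d ≤ (covN S ρ : ℝ) := by
      have hcard : ((topt.image cE).card : ℝ) ≤ (covN S ρ : ℝ) := by
        rw [← htoptcard]; exact_mod_cast Finset.card_image_le
      have h2 : L^d ≤ (covN S ρ : ℝ) * (2*ρ)^d :=
        hvol.trans (mul_le_mul_of_nonneg_right hcard (by positivity))
      rw [← mul_pow, show (L/2)*ρ⁻¹ = L/(2*ρ) by field_simp, div_pow,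
        div_le_iff₀ (by positivity)]
      exact h2
    exact ⟨hlow, hupper⟩
  -- endgame
  have hdcast : ((l:ℝ) * r) = (d:ℝ) := by rw [hdval]; push_cast; ring
  rw [hdcast]
  simp only [one_div]
  have hXtop : Tendsto (fun ρ : ℝ => Real.log ρ⁻¹) (nhdsWithin 0 (Set.Ioi 0)) atTop :=
    Real.tendsto_log_atTop.comp tendsto_inv_nhdsGT_zero
  have hlim : ∀ c : ℝ, Tendsto (fun ρ : ℝ => (d:ℝ) + Real.log c / Real.log ρ⁻¹)
      (nhdsWithin 0 (Set.Ioi 0)) (nhds ((d:ℝ))) := by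
    intro c
    have h0 : Tendsto (fun ρ : ℝ => Real.log c / Real.log ρ⁻¹)
        (nhdsWithin 0 (Set.Ioi 0)) (nhds 0) :=
      Tendsto.div_atTop tendsto_const_nhds hXtop
    simpa using h0.const_add ((d:ℝ))
  have hmem : Set.Ioo (0:ℝ) (min 1 L) ∈ nhdsWithin (0:ℝ) (Set.Ioi 0) :=
    Ioo_mem_nhdsGT_of_mem ⟨le_refl 0, lt_min one_pos hL⟩
  have key : ∀ ρ ∈ Set.Ioo (0:ℝ) (min 1 L),
      ((d:ℝ) + Real.log ((L/2)^d) / Real.log ρ⁻¹ ≤ Real.log (covN S ρ) / Real.log ρ⁻¹) ∧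
      (Real.log (covN S ρ) / Real.log ρ⁻¹ ≤
        (d:ℝ) + Real.log ((2:ℝ)^m * (4*L)^d) / Real.log ρ⁻¹) := by
    intro ρ hρmem
    obtain ⟨hρ0, hρm⟩ := hρmem
    have hρ1 : ρ < 1 := lt_of_lt_of_le hρm (min_le_left _ _)
    have hρL : ρ ≤ L := le_of_lt (lt_of_lt_of_le hρm (min_le_right _ _))
    obtain ⟨hlo, hhi⟩ := hbounds ρ hρ0 hρL
    have hX : 0 < Real.log ρ⁻¹ := Real.log_pos (one_lt_inv_iff₀.mpr ⟨hρ0, hρ1⟩)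
    have hcovpos : (0:ℝ) < (covN S ρ : ℝ) := lt_of_lt_of_le (by positivity) hlo
    have hρinvpos : (0:ℝ) < ρ⁻¹^d := by positivity
    have heq : ∀ c : ℝ, (d:ℝ) + c / Real.log ρ⁻¹
        = (c + (d:ℝ) * Real.log ρ⁻¹) / Real.log ρ⁻¹ := by
      intro c
      rw [add_div, mul_div_assoc, div_self hX.ne', mul_one, add_comm]
    constructor
    · have hlog : Real.log ((L/2)^d) + (d:ℝ) * Real.log ρ⁻¹ ≤ Real.log (covN S ρ) := by
        have h2 := Real.log_le_log (by positivity) hlo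
        rwa [Real.log_mul hC₁pos.ne' hρinvpos.ne', Real.log_pow (n := d) (x := ρ⁻¹)] at h2
      rw [heq]
      exact div_le_div_of_nonneg_right hlog hX.le
    · have hlog : Real.log (covN S ρ) ≤
          Real.log ((2:ℝ)^m * (4*L)^d) + (d:ℝ) * Real.log ρ⁻¹ := by
        have h2 := Real.log_le_log hcovpos hhi
        rwa [Real.log_mul hC₂pos.ne' hρinvpos.ne', Real.log_pow (n := d) (x := ρ⁻¹)] at h2
      rw [heq]
      exact div_le_div_of_nonneg_right hlog hX.le
  refine tendsto_of_tendsto_of_tendsto_of_le_of_le'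
    (hlim ((L/2)^d)) (hlim ((2:ℝ)^m * (4*L)^d)) ?_ ?_
  · filter_upwards [hmem] with ρ hρ using (key ρ hρ).1
  · filter_upwards [hmem] with ρ hρ using (key ρ hρ).2
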